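/- Let β > 1, let L: [0,1] → [0,1] be Lipschitz with constant κ, and φ: ℕ → (0,1] a positive function. For any n with β^n > 3κ and any full word w ∈ Ξ_n(β), the set 𝔍(w; L, φ) = {x ∈ 𝔍(w) : |T_β^n x − L(x)| < φ(n)} is an interval with (1/4) φ(n) β^{-n} ≤ |𝔍(w; L, φ)|, and for any admissible w ∈ Σ_n(β), |𝔍(w; L, φ)| ≤ 3 φ(n) β^{-n}. -/

import Mathlib

open MeasureTheory Set
open scoped Classical

/-- The beta-transformation `T_β x = βx - ⌊βx⌋`. -/
noncomputable def betaT (β x : ℝ) : ℝ := Int.fract (β * x)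

/-- The `k`-th digit (0-indexed) of the β-expansion of `x`: `ε_{k+1}(x,β) = ⌊β T_β^k x⌋`. -/
noncomputable def betaDigit (β x : ℝ) (k : ℕ) : ℕ := ⌊β * (betaT β)^[k] x⌋₊

/-- `Σ_n(β)`: admissible words of length `n`, i.e. prefixes of β-expansions of points of `[0,1)`. -/
def admWords (β : ℝ) (n : ℕ) : Set (Fin n → ℕ) :=
  {w | ∃ x ∈ Set.Ico (0:ℝ) 1, ∀ i : Fin n, w i = betaDigit β x i}

/-- The cylinder `𝔍(w)` of points of `[0,1)` whose β-expansion starts with `w`. -/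
def cyl (β : ℝ) {n : ℕ} (w : Fin n → ℕ) : Set ℝ :=
  {x | x ∈ Set.Ico (0:ℝ) 1 ∧ ∀ i : Fin n, betaDigit β x i = w i}

/-- `Ξ_n(β)`: admissible words of length `n` whose cylinder is full (of length `β^{-n}`). -/
def fullWords (β : ℝ) (n : ℕ) : Set (Fin n → ℕ) :=
  {w | w ∈ admWords β n ∧ volume (cyl β w) = ENNReal.ofReal (1 / β ^ n)}

/-- `ε(β)`: the β-expansion of 1 (0-indexed). -/
noncomputable def eps1 (β : ℝ) (k : ℕ) : ℕ := betaDigit β 1 k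

/-- `ε*(β)`: the infinite β-expansion of 1.  If `ε(β)` has a last nonzero digit at
(0-indexed) position `N`, it is the periodic sequence `(ε_0 ⋯ ε_{N-1} (ε_N - 1))^∞`;
otherwise it is `ε(β)` itself. -/

noncomputable def epsStar (β : ℝ) : ℕ → ℕ :=
  if h : ∃ N, eps1 β N ≠ 0 ∧ ∀ k, N < k → eps1 β k = 0 then
    fun k => if k % (h.choose + 1) = h.choose then eps1 β h.choose - 1
             else eps1 β (k % (h.choose + 1))
  else eps1 β

/-- Strict lexicographic order on sequences of nonnegative integers. -/
def lexLt (a b : ℕ → ℕ) : Prop := ∃ i, (∀ j, j < i → a j = b j) ∧ a i < b i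

/-- Strict lexicographic order on words of length `n`. -/
def wordLt {n : ℕ} (a b : Fin n → ℕ) : Prop :=
  ∃ i : Fin n, (∀ j, j < i → a j = b j) ∧ a i < b i

/-- `Ω_n(x)`: all length-`n` prefixes of β-expansions of `x` over all bases `β > 1`. -/
def prefWords (x : ℝ) (n : ℕ) : Set (Fin n → ℕ) :=
  {w | ∃ β : ℝ, 1 < β ∧ ∀ i : Fin n, w i = betaDigit β x i}

/-- The parameter cylinder `I(w) = {β > 1 : ε_1(x,β)⋯ε_n(x,β) = w}`. -/
def pcyl (x : ℝ) {n : ℕ} (w : Fin n → ℕ) : Set ℝ :=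
  {β | 1 < β ∧ ∀ i : Fin n, betaDigit β x i = w i}

/-- `Λ_n(x)`: words whose parameter cylinder is full, i.e. `{T_β^n x : β ∈ I(w)} = [0,1)`. -/
def pfull (x : ℝ) (n : ℕ) : Set (Fin n → ℕ) :=
  {w | w ∈ prefWords x n ∧ (fun β => (betaT β)^[n] x) '' pcyl x w = Set.Ico (0:ℝ) 1}

lemma my_betaT_mem (β x : ℝ) : betaT β x ∈ Set.Ico (0:ℝ) 1 :=
  ⟨Int.fract_nonneg _, Int.fract_lt_one _⟩

lemma my_iter_mem (β : ℝ) {x : ℝ} (hx : x ∈ Set.Ico (0:ℝ) 1) (k : ℕ) :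
    (betaT β)^[k] x ∈ Set.Ico (0:ℝ) 1 := by
  induction k with
  | zero => exact hx
  | succ k ih => rw [Function.iterate_succ_apply']; exact my_betaT_mem _ _

lemma my_betaT_eq (β u : ℝ) (h0 : 0 ≤ β * u) :
    betaT β u = β * u - (⌊β * u⌋₊ : ℝ) := by
  rw [betaT, Int.fract, natCast_floor_eq_intCast_floor h0]

lemma my_iter_formula (β : ℝ) (hβ : 1 < β) {x : ℝ} (hx : x ∈ Set.Ico (0:ℝ) 1) (n : ℕ) :
    (betaT β)^[n] x
      = β ^ n * (x - ∑ i ∈ Finset.range n, (betaDigit β x i : ℝ) / β ^ (i + 1)) := by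
  have hb0 : (0:ℝ) < β := lt_trans zero_lt_one hβ
  induction n with
  | zero => simp
  | succ n ih =>
    have hnn : 0 ≤ β * (betaT β)^[n] x := mul_nonneg hb0.le (my_iter_mem β hx n).1
    rw [Function.iterate_succ_apply', my_betaT_eq β _ hnn, ih, Finset.sum_range_succ]
    have hd : (⌊β * (betaT β)^[n] x⌋₊ : ℝ) = (betaDigit β x n : ℝ) := by rw [betaDigit]
    rw [ih] at hd
    rw [hd]
    have h1 : β ^ (n + 1) ≠ 0 := by positivity
    field_simp
    ring

lemma my_sandwich (β : ℝ) (hβ : 1 < β) {x y z : ℝ} (hx : x ∈ Set.Ico (0:ℝ) 1)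
    (hy : y ∈ Set.Ico (0:ℝ) 1) (hxz : x ≤ z) (hzy : z ≤ y) (k : ℕ)
    (hd : ∀ i, i < k → betaDigit β x i = betaDigit β y i) :
    (∀ i, i < k → betaDigit β z i = betaDigit β x i) ∧
      (betaT β)^[k] x ≤ (betaT β)^[k] z ∧ (betaT β)^[k] z ≤ (betaT β)^[k] y := by
  have hz : z ∈ Set.Ico (0:ℝ) 1 := ⟨le_trans hx.1 hxz, lt_of_le_of_lt hzy hy.2⟩
  have hb0 : (0:ℝ) < β := lt_trans zero_lt_one hβ
  induction k with
  | zero => exact ⟨fun i hi => absurd hi (Nat.not_lt_zero i), hxz, hzy⟩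
  | succ k ih =>
    obtain ⟨ihd, ihx, ihy⟩ := ih (fun i hi => hd i (Nat.lt_succ_of_lt hi))
    have hfx : β * (betaT β)^[k] x ≤ β * (betaT β)^[k] z :=
      mul_le_mul_of_nonneg_left ihx hb0.le
    have hfy : β * (betaT β)^[k] z ≤ β * (betaT β)^[k] y :=
      mul_le_mul_of_nonneg_left ihy hb0.le
    have h1 : betaDigit β x k ≤ betaDigit β z k := Nat.floor_mono hfx
    have h2 : betaDigit β z k ≤ betaDigit β y k := Nat.floor_mono hfy
    have hdk : betaDigit β z k = betaDigit β x k := by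
      have := hd k (Nat.lt_succ_self k); omega
    have hdky : betaDigit β z k = betaDigit β y k := by
      have := hd k (Nat.lt_succ_self k); omega
    have ex : (betaT β)^[k+1] x
        = β * (betaT β)^[k] x - (betaDigit β x k : ℝ) := by
      rw [Function.iterate_succ_apply',
        my_betaT_eq β _ (mul_nonneg hb0.le (my_iter_mem β hx k).1)]; rfl
    have ez : (betaT β)^[k+1] z
        = β * (betaT β)^[k] z - (betaDigit β z k : ℝ) := by
      rw [Function.iterate_succ_apply',
        my_betaT_eq β _ (mul_nonneg hb0.le (my_iter_mem β hz k).1)]; rfl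
    have ey : (betaT β)^[k+1] y
        = β * (betaT β)^[k] y - (betaDigit β y k : ℝ) := by
      rw [Function.iterate_succ_apply',
        my_betaT_eq β _ (mul_nonneg hb0.le (my_iter_mem β hy k).1)]; rfl
    refine ⟨?_, ?_, ?_⟩
    · intro i hi
      rcases Nat.lt_succ_iff_lt_or_eq.mp hi with h | h
      · exact ihd i h
      · subst h; exact hdk
    · rw [ex, ez, hdk]; linarith
    · rw [ez, ey, hdky]; linarith


theorem recurrence_cylinder_estimates (β : ℝ) (hβ : 1 < β) (κ : NNReal) (L : ℝ → ℝ)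
    (hL : LipschitzOnWith κ L (Set.Icc 0 1))
    (hL01 : ∀ y ∈ Set.Icc (0:ℝ) 1, L y ∈ Set.Icc (0:ℝ) 1)
    (φ : ℕ → ℝ) (hφ : ∀ k, φ k ∈ Set.Ioc (0:ℝ) 1)
    (n : ℕ) (hn : 3 * (κ : ℝ) < β ^ n) :
    (∀ w ∈ admWords β n,
        ({x ∈ cyl β w | |(betaT β)^[n] x - L x| < φ n}).OrdConnected ∧
          volume {x ∈ cyl β w | |(betaT β)^[n] x - L x| < φ n} ≤
            ENNReal.ofReal (3 * φ n / β ^ n)) ∧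
      (∀ w ∈ fullWords β n,
        ENNReal.ofReal (φ n / (4 * β ^ n)) ≤
          volume {x ∈ cyl β w | |(betaT β)^[n] x - L x| < φ n}) := by
  have hb0 : (0:ℝ) < β := lt_trans zero_lt_one hβ
  have hbn : (0:ℝ) < β ^ n := pow_pos hb0 n
  have hφ0 : 0 < φ n := (hφ n).1
  have hφ1 : φ n ≤ 1 := (hφ n).2
  have hLip : ∀ u ∈ Set.Icc (0:ℝ) 1, ∀ v ∈ Set.Icc (0:ℝ) 1,
      |L v - L u| ≤ (κ:ℝ) * |v - u| := by
    intro u hu v hv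
    have := hL.dist_le_mul v hv u hu
    rwa [Real.dist_eq, Real.dist_eq] at this
  have hcylT : ∀ (w : Fin n → ℕ), ∀ x ∈ cyl β w,
      (betaT β)^[n] x = β ^ n * (x - ∑ i : Fin n, (w i : ℝ) / β ^ ((i:ℕ) + 1)) := by
    intro w x hx
    rw [my_iter_formula β hβ hx.1 n]
    congr 2
    rw [← Fin.sum_univ_eq_sum_range (fun i => (betaDigit β x i : ℝ) / β ^ (i + 1)) n]
    exact Finset.sum_congr rfl fun i _ => by rw [hx.2 i]
  have hslope : ∀ (c u v : ℝ), u ∈ Set.Icc (0:ℝ) 1 → v ∈ Set.Icc (0:ℝ) 1 → u ≤ v →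
      2/3 * β^n * (v - u) ≤ (β^n * (v - c) - L v) - (β^n * (u - c) - L u) ∧
      (β^n * (v - c) - L v) - (β^n * (u - c) - L u) ≤ 4/3 * β^n * (v - u) := by
    intro c u v hu hv huv
    have h := hLip u hu v hv
    rw [abs_of_nonneg (by linarith : (0:ℝ) ≤ v - u)] at h
    obtain ⟨h1, h2⟩ := abs_le.mp h
    have hm : 0 ≤ (β^n - 3 * (κ:ℝ)) * (v - u) :=
      mul_nonneg (by linarith) (by linarith)
    constructor <;> nlinarith [κ.2]
  have hcylmem : ∀ (w : Fin n → ℕ), ∀ x ∈ cyl β w, x ∈ Set.Icc (0:ℝ) 1 :=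
    fun w x hx => ⟨hx.1.1, hx.1.2.le⟩
  have hcylOC : ∀ (w : Fin n → ℕ), ∀ x ∈ cyl β w, ∀ y ∈ cyl β w,
      Set.Icc x y ⊆ cyl β w := by
    intro w x hx y hy z hz
    have hs := my_sandwich β hβ hx.1 hy.1 hz.1 hz.2 n
      (fun i hi => by rw [hx.2 ⟨i, hi⟩, hy.2 ⟨i, hi⟩])
    exact ⟨⟨le_trans hx.1.1 hz.1, lt_of_le_of_lt hz.2 hy.1.2⟩,
      fun i => by rw [hs.1 i i.2, hx.2 i]⟩
  constructor
  · intro w _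
    constructor
    · refine ⟨fun x hx y hy z hz => ?_⟩
      have hzc : z ∈ cyl β w := hcylOC w x hx.1 y hy.1 hz
      refine ⟨hzc, ?_⟩
      rw [hcylT w z hzc]
      have gx := hx.2; rw [hcylT w x hx.1] at gx
      have gy := hy.2; rw [hcylT w y hy.1] at gy
      obtain ⟨gx1, gx2⟩ := abs_lt.mp gx
      obtain ⟨gy1, gy2⟩ := abs_lt.mp gy
      have h1 := (hslope (∑ i : Fin n, (w i : ℝ) / β ^ ((i:ℕ) + 1)) x z (hcylmem w x hx.1) (hcylmem w z hzc) hz.1).1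
      have h2 := (hslope (∑ i : Fin n, (w i : ℝ) / β ^ ((i:ℕ) + 1)) z y (hcylmem w z hzc) (hcylmem w y hy.1) hz.2).1
      have hp1 : 0 ≤ 2/3 * β^n * (z - x) :=
        mul_nonneg (by positivity) (by linarith [hz.1])
      have hp2 : 0 ≤ 2/3 * β^n * (y - z) :=
        mul_nonneg (by positivity) (by linarith [hz.2])
      rw [abs_lt]; constructor <;> linarith
    · refine le_trans (Real.volume_le_diam _) (EMetric.diam_le ?_)
      intro x hx y hy
      rw [edist_dist, Real.dist_eq]
      apply ENNReal.ofReal_le_ofReal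
      have key : ∀ u v : ℝ, u ∈ {x ∈ cyl β w | |(betaT β)^[n] x - L x| < φ n} →
          v ∈ {x ∈ cyl β w | |(betaT β)^[n] x - L x| < φ n} → u ≤ v →
          v - u ≤ 3 * φ n / β^n := by
        intro u v hu hv huv
        have gu := hu.2; rw [hcylT w u hu.1] at gu
        have gv := hv.2; rw [hcylT w v hv.1] at gv
        obtain ⟨gu1, gu2⟩ := abs_lt.mp gu
        obtain ⟨gv1, gv2⟩ := abs_lt.mp gv
        have h1 := (hslope (∑ i : Fin n, (w i : ℝ) / β ^ ((i:ℕ) + 1)) u v (hcylmem w u hu.1) (hcylmem w v hv.1) huv).1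
        rw [le_div_iff₀ hbn]
        nlinarith
      rcases le_total x y with h | h
      · rw [abs_of_nonpos (by linarith)]; linarith [key x y hx hy h]
      · rw [abs_of_nonneg (by linarith)]; exact key y x hy hx h
  · intro w hw
    obtain ⟨hadm, hvol⟩ := hw
    obtain ⟨x₀, hx₀mem, hx₀d⟩ := hadm
    have hne : (cyl β w).Nonempty := ⟨x₀, hx₀mem, fun i => (hx₀d i).symm⟩
    have hbdd : BddAbove (cyl β w) := ⟨1, fun x hx => hx.1.2.le⟩
    have hbddb : BddBelow (cyl β w) := ⟨0, fun x hx => hx.1.1⟩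
    obtain ⟨a, hTa⟩ : ∃ a : ℝ, ∀ x ∈ cyl β w, (betaT β)^[n] x = β^n * (x - a) :=
      ⟨_, hcylT w⟩
    set A := sInf (cyl β w) with hA
    set B := sSup (cyl β w) with hB
    have hA0 : 0 ≤ A := le_csInf hne fun x hx => hx.1.1
    have hB1 : B ≤ 1 := csSup_le hne fun x hx => hx.1.2.le
    have hAB : A ≤ B := csInf_le_csSup hne hbddb hbdd
    have hIoo : Set.Ioo A B ⊆ cyl β w := by
      intro z hz
      obtain ⟨x, hxc, hxz⟩ := exists_lt_of_csInf_lt hne hz.1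
      obtain ⟨y, hyc, hzy⟩ := exists_lt_of_lt_csSup hne hz.2
      exact hcylOC w x hxc y hyc ⟨hxz.le, hzy.le⟩
    have hrange : ∀ x ∈ cyl β w, a ≤ x ∧ x < a + 1/β^n := by
      intro x hx
      have h1 := (my_iter_mem β hx.1 n).1
      have h2 := (my_iter_mem β hx.1 n).2
      rw [hTa x hx] at h1 h2
      constructor
      · by_contra hc; push_neg at hc
        nlinarith [mul_pos hbn (show (0:ℝ) < a - x by linarith)]
      · by_contra hc; push_neg at hc
        have h3 : β^n * (1/β^n) ≤ β^n * (x - a) :=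
          mul_le_mul_of_nonneg_left (by linarith) hbn.le
        have h4 : β^n * (1/β^n) = 1 := by field_simp
        linarith
    have hBle : B ≤ a + 1/β^n := csSup_le hne fun x hx => (hrange x hx).2.le
    have haA : a ≤ A := le_csInf hne fun x hx => (hrange x hx).1
    have hvolIcc : volume (cyl β w) ≤ volume (Set.Icc A B) :=
      measure_mono fun x hx => ⟨csInf_le hbddb hx, le_csSup hbdd hx⟩
    rw [hvol, Real.volume_Icc] at hvolIcc
    have hBA : 1/β^n ≤ B - A := by
      rwa [ENNReal.ofReal_le_ofReal_iff (by linarith)] at hvolIcc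
    have hAa : A = a := le_antisymm (by linarith) haA
    have hBa : B = a + 1/β^n := le_antisymm hBle (by linarith)
    have hgc : ContinuousOn (fun x => β^n * (x - a) - L x) (Set.Icc A B) := by
      apply ContinuousOn.sub
      · exact (continuous_const.mul (continuous_id.sub continuous_const)).continuousOn
      · exact hL.continuousOn.mono fun x hx => ⟨le_trans hA0 hx.1, le_trans hx.2 hB1⟩
    have hgA : β^n * (A - a) - L A ≤ 0 := by
      have hLA := (hL01 A ⟨hA0, le_trans hAB hB1⟩).1
      have e : β^n * (A - a) = 0 := by rw [hAa]; ring
      linarith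
    have hgB : 0 ≤ β^n * (B - a) - L B := by
      have hLB := (hL01 B ⟨le_trans hA0 hAB, hB1⟩).2
      have e : β^n * (B - a) = 1 := by
        rw [hBa, show a + 1/β^n - a = 1/β^n by ring]
        field_simp
      linarith
    obtain ⟨t, htmem, htg⟩ := intermediate_value_Icc hAB hgc ⟨hgA, hgB⟩
    simp only at htg
    have htI : t ∈ Set.Icc (0:ℝ) 1 := ⟨le_trans hA0 htmem.1, le_trans htmem.2 hB1⟩
    set r := φ n / (2 * β^n) with hrdef
    have hr0 : 0 < r := by positivity
    have hrB : 2 * r ≤ B - A := by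
      have e : B - A = 1/β^n := by rw [hAa, hBa]; ring
      have h2 : (2:ℝ) * (φ n / (2*β^n)) = φ n / β^n := by ring
      rw [e, hrdef, h2]
      gcongr
    have hkey : ∀ z, z ∈ Set.Ioo A B → |z - t| < r →
        z ∈ {x ∈ cyl β w | |(betaT β)^[n] x - L x| < φ n} := by
      intro z hz hzt
      have hzc := hIoo hz
      refine ⟨hzc, ?_⟩
      rw [hTa z hzc]
      have hzI : z ∈ Set.Icc (0:ℝ) 1 := hcylmem w z hzc
      obtain ⟨ht1, ht2⟩ := abs_lt.mp hzt
      have hmul : β^n * r = φ n / 2 := by rw [hrdef]; field_simp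
      rcases le_total z t with h | h
      · obtain ⟨hlo, hhi⟩ := hslope a z t hzI htI h
        have hp : 0 ≤ 2/3 * β^n * (t - z) :=
          mul_nonneg (by positivity) (by linarith)
        have hlt : β^n * (t - z) < β^n * r :=
          mul_lt_mul_of_pos_left (by linarith) hbn
        rw [abs_lt]; constructor
        · linarith
        · linarith
      · obtain ⟨hlo, hhi⟩ := hslope a t z htI hzI h
        have hp : 0 ≤ 2/3 * β^n * (z - t) :=
          mul_nonneg (by positivity) (by linarith)
        have hlt : β^n * (z - t) < β^n * r :=
          mul_lt_mul_of_pos_left (by linarith) hbn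
        rw [abs_lt]; constructor
        · linarith
        · linarith
    have hquarter : φ n / (4 * β^n) ≤ r := by
      rw [hrdef, div_le_div_iff₀ (by positivity) (by positivity)]
      nlinarith
    rcases le_total t ((A + B)/2) with hside | hside
    · have hJ : Set.Ioo t (t + r) ⊆ {x ∈ cyl β w | |(betaT β)^[n] x - L x| < φ n} := by
        intro z hz
        obtain ⟨hz1, hz2⟩ := hz
        have hzB : z < B := by linarith
        have hzA : A < z := lt_of_le_of_lt htmem.1 hz1
        have habs : |z - t| < r := by rw [abs_of_pos (by linarith)]; linarith
        exact hkey z ⟨hzA, hzB⟩ habs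
      refine le_trans ?_ (measure_mono hJ)
      rw [Real.volume_Ioo]
      exact ENNReal.ofReal_le_ofReal (by linarith)
    · have hJ : Set.Ioo (t - r) t ⊆ {x ∈ cyl β w | |(betaT β)^[n] x - L x| < φ n} := by
        intro z hz
        obtain ⟨hz1, hz2⟩ := hz
        have hzA : A < z := by linarith
        have hzB : z < B := lt_of_lt_of_le hz2 htmem.2
        have habs : |z - t| < r := by rw [abs_of_neg (by linarith)]; linarith
        exact hkey z ⟨hzA, hzB⟩ habs
      refine le_trans ?_ (measure_mono hJ)
      rw [Real.volume_Ioo]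
      exact ENNReal.ofReal_le_ofReal (by linarith)
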